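/- Let m ≥ 2 and let Q_{4m} be the generalized quaternion (dicyclic) group of order 4m. Then the non-commuting graph of Q_{4m} is isomorphic to the complete (m+1)-partite graph with m parts of size 2 and one part of size 2m−2. -/

import Mathlib

/-- The non-commuting graph of a group `G`. -/
def ncGraph (G : Type*) [Group G] : SimpleGraph {x : G // x ∉ Subgroup.center G} where
  Adj x y := (x : G) * y ≠ (y : G) * x
  symm := ⟨fun _ _ h e => h e.symm⟩
  loopless := ⟨fun _ h => h rfl⟩

namespace NCQuat

open QuaternionGroup

variable {m : ℕ}

lemma two_mul_eq_zero_iff (hm : 2 ≤ m) (k : ZMod (2 * m)) :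
    2 * k = 0 ↔ k = 0 ∨ k = (m : ZMod (2 * m)) := by
  haveI : NeZero (2 * m) := ⟨by omega⟩
  constructor
  · intro h
    have hk : ((2 * k.val : ℕ) : ZMod (2 * m)) = 0 := by
      push_cast [ZMod.natCast_zmod_val]
      exact h
    rw [ZMod.natCast_eq_zero_iff] at hk
    have hdvd : m ∣ k.val := (mul_dvd_mul_iff_left (two_ne_zero)).mp hk
    obtain ⟨c, hc⟩ := hdvd
    have hlt := ZMod.val_lt k
    have hc2 : c < 2 := by
      by_contra hge
      have := Nat.mul_le_mul_left m (le_of_not_gt hge)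
      omega
    interval_cases c
    · left
      rw [← ZMod.natCast_zmod_val k, hc]
      simp
    · right
      rw [← ZMod.natCast_zmod_val k, hc]
      simp
  · rintro (rfl | rfl)
    · ring
    · have : ((2 * m : ℕ) : ZMod (2 * m)) = 0 := ZMod.natCast_self _
      push_cast at this
      exact this

lemma a_mem_center_iff (hm : 2 ≤ m) (i : ZMod (2 * m)) :
    a i ∈ Subgroup.center (QuaternionGroup m) ↔ 2 * i = 0 := by
  rw [Subgroup.mem_center_iff]
  constructor
  · intro h
    have := h (xa 0)
    simp only [xa_mul_a, a_mul_xa, zero_add, zero_sub, xa.injEq] at this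
    linear_combination this
  · intro h g
    have hi : i = -i := by linear_combination h
    rcases g with j | j
    · simp [add_comm]
    · simp only [xa_mul_a, a_mul_xa, xa.injEq, sub_eq_add_neg, ← hi]


lemma xa_not_center (hm : 2 ≤ m) (i : ZMod (2 * m)) :
    xa i ∉ Subgroup.center (QuaternionGroup m) := by
  rw [Subgroup.mem_center_iff]
  intro h
  have := h (a 1)
  simp only [a_mul_xa, xa_mul_a, xa.injEq] at this
  have h2 : (2 : ZMod (2 * m)) = 0 := by linear_combination -this
  have : ((2 : ℕ) : ZMod (2 * m)) = 0 := by push_cast; exact h2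
  rw [ZMod.natCast_eq_zero_iff] at this
  have := Nat.le_of_dvd (by omega) this
  omega

end NCQuat

namespace NCQuat
open QuaternionGroup

universe u in
lemma eq_of_heq_cast {α β γ : Sort u} {e1 : α = β} {e2 : α = γ} {x y : α}
    (h : HEq (cast e1 x) (cast e2 y)) : x = y := by
  subst e1; subst e2; exact eq_of_heq h

/-- index of a noncentral rotation inside the big part -/
def aIdx (m : ℕ) (hm : 2 ≤ m) (i : ZMod (2 * m)) : Fin (2 * m - 2) :=
  ⟨if i.val < m then i.val - 1 else i.val - 2, by
    haveI : NeZero (2 * m) := ⟨by omega⟩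
    have h := ZMod.val_lt i
    split <;> omega⟩

def qmap (m : ℕ) (hm : 2 ≤ m)
    (x : {x : QuaternionGroup m // x ∉ Subgroup.center (QuaternionGroup m)}) :
    Σ i : Fin (m + 1), (if (i : ℕ) < m then Fin 2 else Fin (2 * m - 2)) :=
  haveI : NeZero (2 * m) := ⟨by omega⟩
  match x with
  | ⟨.a i, _⟩ => ⟨⟨m, Nat.lt_succ_self m⟩, cast (if_neg (lt_irrefl m)).symm (aIdx m hm i)⟩
  | ⟨.xa i, _⟩ =>
      ⟨⟨i.val % m, Nat.lt_succ_of_lt (Nat.mod_lt _ (by omega))⟩,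
        cast (if_pos (Nat.mod_lt _ (by omega : 0 < m))).symm
          (⟨i.val / m, by
            have := ZMod.val_lt i
            exact Nat.div_lt_of_lt_mul (by omega)⟩ : Fin 2)⟩

lemma qmap_inj (m : ℕ) (hm : 2 ≤ m) : Function.Injective (qmap m hm) := by
  haveI : NeZero (2 * m) := ⟨by omega⟩
  rintro ⟨(i | i), hx⟩ ⟨(j | j), hy⟩ h
  · -- a, a
    have h1 := congrArg Sigma.fst h
    have h2 : HEq (qmap m hm ⟨a i, hx⟩).2 (qmap m hm ⟨a j, hy⟩).2 := by rw [h]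
    simp only [qmap] at h2
    have h3 : aIdx m hm i = aIdx m hm j := eq_of_heq_cast h2
    simp only [aIdx, Fin.mk.injEq] at h3
    -- noncentrality facts
    rw [a_mem_center_iff hm, two_mul_eq_zero_iff hm] at hx hy
    push_neg at hx hy
    have hi0 : i.val ≠ 0 := fun h0 => hx.1 ((ZMod.val_eq_zero i).mp h0)
    have hj0 : j.val ≠ 0 := fun h0 => hy.1 ((ZMod.val_eq_zero j).mp h0)
    have him : i.val ≠ m := by
      intro h0
      exact hx.2 (by rw [← ZMod.natCast_zmod_val i, h0])
    have hjm : j.val ≠ m := by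
      intro h0
      exact hy.2 (by rw [← ZMod.natCast_zmod_val j, h0])
    have hvi := ZMod.val_lt i
    have hvj := ZMod.val_lt j
    have : i.val = j.val := by
      split at h3 <;> split at h3 <;> omega
    exact Subtype.ext (congrArg a (ZMod.val_injective _ this))
  · -- a, xa : first components differ
    have h1 := congrArg (fun z => (Sigma.fst z : Fin (m+1)).val) h
    simp only [qmap] at h1
    have := Nat.mod_lt j.val (show 0 < m by omega)
    omega
  · have h1 := congrArg (fun z => (Sigma.fst z : Fin (m+1)).val) h
    simp only [qmap] at h1
    have := Nat.mod_lt i.val (show 0 < m by omega)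
    omega
  · -- xa, xa
    have h1 := congrArg (fun z => (Sigma.fst z : Fin (m+1)).val) h
    simp only [qmap] at h1
    have h2 : HEq (qmap m hm ⟨xa i, hx⟩).2 (qmap m hm ⟨xa j, hy⟩).2 := by rw [h]
    simp only [qmap] at h2
    have h3 : i.val / m = j.val / m := congrArg Fin.val (eq_of_heq_cast h2)
    have : i.val = j.val := by
      conv_lhs => rw [← Nat.div_add_mod i.val m]
      conv_rhs => rw [← Nat.div_add_mod j.val m]
      rw [h3, h1]
    exact Subtype.ext (congrArg xa (ZMod.val_injective _ this))

end NCQuat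

namespace NCQuat
open QuaternionGroup

lemma qmap_surj (m : ℕ) (hm : 2 ≤ m) : Function.Surjective (qmap m hm) := by
  haveI : NeZero (2 * m) := ⟨by omega⟩
  rintro ⟨⟨i, hi⟩, y⟩
  by_cases hlt : i < m
  · -- small parts: preimage is a reflection
    set c : Fin 2 := cast (if_pos hlt) y with hc
    set v : ℕ := i + m * c.val with hv
    have hvlt : v < 2 * m := by
      have h1 : c.val ≤ 1 := by omega
      have h2 : m * c.val ≤ m * 1 := Nat.mul_le_mul_left m h1
      omega
    refine ⟨⟨xa (v : ZMod (2 * m)), xa_not_center hm _⟩, ?_⟩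
    have hval : ((v : ZMod (2 * m))).val = v := ZMod.val_cast_of_lt hvlt
    have hmod : ((v : ZMod (2 * m))).val % m = i := by
      rw [hval, hv, Nat.add_mul_mod_self_left, Nat.mod_eq_of_lt hlt]
    have hdiv : ((v : ZMod (2 * m))).val / m = c.val := by
      rw [hval, hv, Nat.add_mul_div_left _ _ (by omega : 0 < m),
        Nat.div_eq_of_lt hlt, zero_add]
    refine Sigma.ext (Fin.ext ?_) ?_
    · exact hmod
    · simp only [qmap]
      refine HEq.trans (cast_heq _ _) ?_
      have : (⟨((v : ZMod (2 * m))).val / m, by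
          have := ZMod.val_lt ((v : ZMod (2 * m)))
          exact Nat.div_lt_of_lt_mul (by omega)⟩ : Fin 2) = c := Fin.ext hdiv
      rw [this, hc]
      exact cast_heq _ _
  · -- big part
    have him : i = m := by omega
    set c : Fin (2 * m - 2) := cast (if_neg hlt) y with hc
    set g : ℕ := if c.val < m - 1 then c.val + 1 else c.val + 2 with hg
    have hclt := c.isLt
    have hglt : g < 2 * m := by rw [hg]; split <;> omega
    have hgval : ((g : ZMod (2 * m))).val = g := ZMod.val_cast_of_lt hglt
    have hg0 : g ≠ 0 := by rw [hg]; split <;> omega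
    have hgm : g ≠ m := by rw [hg]; split <;> omega
    have hnc : a (g : ZMod (2 * m)) ∉ Subgroup.center (QuaternionGroup m) := by
      rw [a_mem_center_iff hm, two_mul_eq_zero_iff hm]
      push_neg
      constructor
      · intro h0
        rw [← ZMod.val_eq_zero, hgval] at h0
        exact hg0 h0
      · intro h0
        have := congrArg ZMod.val h0
        rw [hgval, ZMod.val_cast_of_lt (by omega : m < 2 * m)] at this
        exact hgm this
    refine ⟨⟨a (g : ZMod (2 * m)), hnc⟩, ?_⟩
    refine Sigma.ext (Fin.ext ?_) ?_
    · exact him.symm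
    · simp only [qmap]
      refine HEq.trans (cast_heq _ _) ?_
      have : aIdx m hm (g : ZMod (2 * m)) = c := by
        apply Fin.ext
        simp only [aIdx, hgval]
        rw [hg]
        by_cases hsm : c.val < m - 1
        · rw [if_pos hsm, if_pos (by omega)]
          omega
        · rw [if_neg hsm, if_neg (by omega)]
          omega
      rw [this, hc]
      exact cast_heq _ _

end NCQuat

namespace NCQuat
open QuaternionGroup

lemma xa_comm_iff (hm : 2 ≤ m) (i j : ZMod (2 * m)) :
    (m : ZMod (2 * m)) + j - i = (m : ZMod (2 * m)) + i - j ↔ i.val % m = j.val % m := by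
  haveI : NeZero (2 * m) := ⟨by omega⟩
  have h1 : ((m : ZMod (2 * m)) + j - i = (m : ZMod (2 * m)) + i - j) ↔ 2 * i = 2 * j := by
    constructor <;> intro h <;> linear_combination -h
  rw [h1]
  constructor
  · intro h
    have h2 : ((2 * i.val : ℕ) : ZMod (2 * m)) = ((2 * j.val : ℕ) : ZMod (2 * m)) := by
      push_cast [ZMod.natCast_zmod_val]
      exact h
    rw [ZMod.natCast_eq_natCast_iff', Nat.mul_mod_mul_left, Nat.mul_mod_mul_left] at h2
    omega
  · intro h
    have h2 : ((2 * i.val : ℕ) : ZMod (2 * m)) = ((2 * j.val : ℕ) : ZMod (2 * m)) := by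
      rw [ZMod.natCast_eq_natCast_iff', Nat.mul_mod_mul_left, Nat.mul_mod_mul_left]
      omega
    push_cast [ZMod.natCast_zmod_val] at h2
    exact h2

end NCQuat

theorem stmt_10 (m : ℕ) (hm : 2 ≤ m) :
    Nonempty (ncGraph (QuaternionGroup m) ≃g
      SimpleGraph.completeMultipartiteGraph
        (fun i : Fin (m + 1) => if (i : ℕ) < m then Fin 2 else Fin (2 * m - 2))) := by
  haveI : NeZero (2 * m) := ⟨by omega⟩
  refine ⟨⟨Equiv.ofBijective (NCQuat.qmap m hm) ⟨NCQuat.qmap_inj m hm, NCQuat.qmap_surj m hm⟩, ?_⟩⟩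
  rintro ⟨(i | i), hx⟩ ⟨(j | j), hy⟩ <;>
    simp only [Equiv.ofBijective_apply, SimpleGraph.comap_adj, SimpleGraph.top_adj, ncGraph,
      NCQuat.qmap, ne_eq]
  · -- a, a : both sides false (they commute)
    constructor
    · intro h
      exact absurd rfl h
    · intro h
      exact absurd (by simp [add_comm] : QuaternionGroup.a i * QuaternionGroup.a j
        = QuaternionGroup.a j * QuaternionGroup.a i) h
  · -- a, xa : both sides true
    rw [NCQuat.a_mem_center_iff hm] at hx
    constructor
    · intro _
      intro hcomm
      simp only [QuaternionGroup.a_mul_xa, QuaternionGroup.xa_mul_a,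
        QuaternionGroup.xa.injEq] at hcomm
      exact hx (by linear_combination -hcomm)
    · intro _
      intro h
      have h2 : m = j.val % m := congrArg Fin.val h
      have := Nat.mod_lt j.val (show 0 < m by omega)
      omega
  · -- xa, a
    rw [NCQuat.a_mem_center_iff hm] at hy
    constructor
    · intro _
      intro hcomm
      simp only [QuaternionGroup.a_mul_xa, QuaternionGroup.xa_mul_a,
        QuaternionGroup.xa.injEq] at hcomm
      exact hy (by linear_combination hcomm)
    · intro _
      intro h
      have h2 : i.val % m = m := congrArg Fin.val h
      have := Nat.mod_lt i.val (show 0 < m by omega)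
      omega
  · -- xa, xa
    rw [not_iff_not.symm]
    push_neg
    constructor
    · intro h
      have h1 : i.val % m = j.val % m := congrArg Fin.val h
      simp only [QuaternionGroup.xa_mul_xa, QuaternionGroup.a.injEq]
      exact (NCQuat.xa_comm_iff hm i j).mpr h1
    · intro h
      simp only [QuaternionGroup.xa_mul_xa, QuaternionGroup.a.injEq] at h
      have h1 := (NCQuat.xa_comm_iff hm i j).mp h
      exact Fin.ext h1
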